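/- Let k, s ≥ 1, f_i, μ_i > 0 with ∑ f_i = 1, β, γ > 0. Define V(y) for y = (y_{iv})_{i≤k, v≤s} with y_{iv} > 0 and ∑_v y_{iv} < f_i by V(y) = ∑_{i,v} y_{iv}(1 + ln y_{iv} − ln((β/(sγ))μ_i)) − (∑_{i,v} y_{iv}) ln(∑_{i,v} y_{iv}) + ∑_i (f_i − ∑_v y_{iv}) ln(f_i − ∑_v y_{iv}). Then H(y, ∂V/∂y) = 0, where H(y,θ) = β(∑_j ∑_v y_{jv})(∑_i μ_i(f_i − ∑_v y_{iv})(e^{θ_{i1}} − 1)) + sγ ∑_i ∑_{v=1}^{s−1} y_{iv}(e^{−θ_{iv}+θ_{i,v+1}} − 1) + sγ ∑_i y_{is}(e^{−θ_{is}} − 1). -/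
import Mathlib


theorem stmt_16 (k s : ℕ) (hk : 1 ≤ k) (hs : 1 ≤ s) (f mu : Fin k → ℝ)
    (hf : ∀ i, 0 < f i) (hfs : ∑ i, f i = 1) (hm : ∀ i, 0 < mu i)
    (β γ : ℝ) (hβ : 0 < β) (hγ : 0 < γ)
    (y : Fin k → ℕ → ℝ)
    (hy : ∀ i, ∀ v ∈ Finset.range s, 0 < y i v)
    (hyf : ∀ i, ∑ v ∈ Finset.range s, y i v < f i)
    (θ : Fin k → ℕ → ℝ)
    (hθ : ∀ i, ∀ v ∈ Finset.range s, θ i v =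
      Real.log (y i v / ((β / (s * γ)) * mu i * (f i - ∑ w ∈ Finset.range s, y i w)
        * ∑ j, ∑ w ∈ Finset.range s, y j w))) :
    β * (∑ j, ∑ v ∈ Finset.range s, y j v)
        * (∑ i, mu i * (f i - ∑ v ∈ Finset.range s, y i v) * (Real.exp (θ i 0) - 1))
      + s * γ * (∑ i, ∑ v ∈ Finset.range (s - 1),
          y i v * (Real.exp (-θ i v + θ i (v + 1)) - 1))
      + s * γ * (∑ i, y i (s - 1) * (Real.exp (-θ i (s - 1)) - 1)) = 0 := by
  have hs0 : (0:ℝ) < (s : ℝ) := by exact_mod_cast hs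
  have hsγ : (0:ℝ) < (s : ℝ) * γ := mul_pos hs0 hγ
  have hne : Finset.Nonempty (Finset.range s) := Finset.nonempty_range_iff.2 (by omega)
  have hS : ∀ i, 0 < ∑ v ∈ Finset.range s, y i v := fun i =>
    Finset.sum_pos (fun v hv => hy i v hv) hne
  have hFS : ∀ i, 0 < f i - ∑ v ∈ Finset.range s, y i v := fun i =>
    sub_pos.2 (hyf i)
  haveI : Nonempty (Fin k) := ⟨⟨0, hk⟩⟩
  have hY : 0 < ∑ j, ∑ v ∈ Finset.range s, y j v :=
    Finset.sum_pos (fun j _ => hS j) Finset.univ_nonempty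
  set Y := ∑ j, ∑ v ∈ Finset.range s, y j v with hYdef
  clear_value Y
  have hP : ∀ i, 0 < (β / (s * γ)) * mu i * (f i - ∑ w ∈ Finset.range s, y i w) * Y :=
    fun i => mul_pos (mul_pos (mul_pos (div_pos hβ hsγ) (hm i)) (hFS i)) hY
  have eθ : ∀ i, ∀ v ∈ Finset.range s, Real.exp (θ i v) =
      y i v / ((β / (s * γ)) * mu i * (f i - ∑ w ∈ Finset.range s, y i w) * Y) := by
    intro i v hv
    rw [hθ i v hv]
    exact Real.exp_log (div_pos (hy i v hv) (hP i))
  have h0 : 0 ∈ Finset.range s := Finset.mem_range.2 (by omega)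
  have hs1 : s - 1 ∈ Finset.range s := Finset.mem_range.2 (by omega)
  have key : ∀ i : Fin k,
      β * Y * (mu i * (f i - ∑ v ∈ Finset.range s, y i v) * (Real.exp (θ i 0) - 1))
      + (s : ℝ) * γ * (∑ v ∈ Finset.range (s - 1),
          y i v * (Real.exp (-θ i v + θ i (v + 1)) - 1))
      + (s : ℝ) * γ * (y i (s - 1) * (Real.exp (-θ i (s - 1)) - 1)) = 0 := by
    intro i
    have hPne := (hP i).ne'
    have step : ∀ v ∈ Finset.range (s - 1),
        y i v * (Real.exp (-θ i v + θ i (v + 1)) - 1) = y i (v + 1) - y i v := by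
      intro v hv
      have hv1 : v ∈ Finset.range s := Finset.mem_range.2 (by
        have := Finset.mem_range.1 hv; omega)
      have hv2 : v + 1 ∈ Finset.range s := Finset.mem_range.2 (by
        have := Finset.mem_range.1 hv; omega)
      have hyne := (hy i v hv1).ne'
      have hx : Real.exp (-θ i v + θ i (v + 1)) = y i (v + 1) / y i v := by
        rw [Real.exp_add, Real.exp_neg, eθ i v hv1, eθ i (v + 1) hv2]
        rw [inv_div, div_mul_div_comm]
        rw [mul_comm, mul_div_mul_right _ _ hPne]
      rw [hx, mul_sub, mul_one, mul_div_cancel₀ _ hyne]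
    have hmid : ∑ v ∈ Finset.range (s - 1),
        y i v * (Real.exp (-θ i v + θ i (v + 1)) - 1) = y i (s - 1) - y i 0 := by
      rw [Finset.sum_congr rfl step]
      exact Finset.sum_range_sub (fun v => y i v) (s - 1)
    have hlast : Real.exp (-θ i (s - 1)) =
        ((β / (s * γ)) * mu i * (f i - ∑ w ∈ Finset.range s, y i w) * Y) / y i (s - 1) := by
      rw [Real.exp_neg, eθ i (s - 1) hs1, inv_div]
    rw [hmid, hlast, eθ i 0 h0]
    have h2 := (hy i (s - 1) hs1).ne'
    field_simp [hβ.ne', hY.ne', (hm i).ne', (hFS i).ne', hsγ.ne', hγ.ne', hs0.ne']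
    ring
  have expand : β * Y
        * (∑ i, mu i * (f i - ∑ v ∈ Finset.range s, y i v) * (Real.exp (θ i 0) - 1))
      + (s:ℝ) * γ * (∑ i, ∑ v ∈ Finset.range (s - 1),
          y i v * (Real.exp (-θ i v + θ i (v + 1)) - 1))
      + (s:ℝ) * γ * (∑ i, y i (s - 1) * (Real.exp (-θ i (s - 1)) - 1))
      = ∑ i : Fin k,
        (β * Y * (mu i * (f i - ∑ v ∈ Finset.range s, y i v) * (Real.exp (θ i 0) - 1))
        + (s : ℝ) * γ * (∑ v ∈ Finset.range (s - 1),
            y i v * (Real.exp (-θ i v + θ i (v + 1)) - 1))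
        + (s : ℝ) * γ * (y i (s - 1) * (Real.exp (-θ i (s - 1)) - 1))) := by
    rw [Finset.mul_sum, Finset.mul_sum, Finset.mul_sum, ← Finset.sum_add_distrib,
      ← Finset.sum_add_distrib]
  rw [expand]
  exact Finset.sum_eq_zero (fun i _ => key i)
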